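/- With the setup of the quadratic truncation, the emergent macroscale diffusivity equals the harmonic mean of the microscale diffusivities: for K ≥ 2, positive reals κ_1,…,κ_K with product G and harmonic mean κ = K(Σ_{i=1}^K 1/κ_i)^{−1}, and any real c_2 > 0, the smaller-magnitude root λ_0(x) = [−K²G/κ + √((K²G/κ)² + 4 c_2 G P_K(x))]/(2 c_2) satisfies λ_0(x)/x → κ as x → 0⁺. -/

import Mathlib

open Filter

private lemma stmt10_real_id (K : ℕ) (P : Polynomial ℝ)
    (hP : ∀ z : ℂ, z ≠ 0 → z ^ K + z⁻¹ ^ K - 2 = Polynomial.aeval (z + z⁻¹ - 2) P) :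
    ∀ z : ℝ, z ≠ 0 → z ^ K + z⁻¹ ^ K - 2 = P.eval (z + z⁻¹ - 2) := by
  intro z hz
  have h := hP (z : ℂ) (by exact_mod_cast hz)
  have h2 : ((z:ℂ) + (z:ℂ)⁻¹ - 2) = ((z + z⁻¹ - 2 : ℝ) : ℂ) := by push_cast; ring
  rw [h2, ← Complex.coe_algebraMap, Polynomial.aeval_algebraMap_apply] at h
  simp only [Polynomial.coe_aeval_eq_eval, Complex.coe_algebraMap] at h
  exact_mod_cast h

private lemma stmt10_ratio (K : ℕ) (hK : 1 ≤ K) (z : ℝ) (hz : 0 < z) (hz1 : z ≠ 1) :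
    (z ^ K + z⁻¹ ^ K - 2) / (z + z⁻¹ - 2) = (∑ i ∈ Finset.range K, z^i)^2 / z^(K-1) := by
  have hg : (z - 1) * (∑ i ∈ Finset.range K, z^i) = z^K - 1 := by
    rw [mul_comm]; exact geom_sum_mul z K
  have hz0 : z ≠ 0 := ne_of_gt hz
  have hz1' : z - 1 ≠ 0 := sub_ne_zero.mpr hz1
  have hK' : z ^ (K - 1) * z = z ^ K := by rw [← pow_succ]; congr 1; omega
  have hden : z + z⁻¹ - 2 ≠ 0 := by
    have : z + z⁻¹ - 2 = (z-1)^2 / z := by field_simp; ring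
    rw [this]; positivity
  rw [div_eq_div_iff hden (pow_ne_zero _ hz0)]
  have key : ((z-1) * (∑ i ∈ Finset.range K, z^i))^2 = (z^K-1)^2 := by rw [hg]
  apply mul_left_cancel₀ hz0
  have hzi : z * z⁻¹ = 1 := mul_inv_cancel₀ hz0
  have hinv : z⁻¹ ^ K * z ^ K = 1 := by rw [← mul_pow, inv_mul_cancel₀ hz0, one_pow]
  linear_combination (z ^ K + z⁻¹ ^ K - 2) * hK' + hinv - key
    - (∑ i ∈ Finset.range K, z^i)^2 * hzi

private lemma stmt10_xne (z : ℝ) (hz : 0 < z) (hz1 : z ≠ 1) : z + z⁻¹ - 2 ≠ 0 := by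
  have hz1' : z - 1 ≠ 0 := sub_ne_zero.mpr hz1
  have : z + z⁻¹ - 2 = (z-1)^2 / z := by field_simp; ring
  rw [this]; positivity

/-- The emergent macroscale diffusivity equals the harmonic mean of the microscale
diffusivities: for `K ≥ 2`, positive reals `κ_1,…,κ_K` with product `G = ∏ κ_i` and
harmonic mean `κ_h = K (∑ 1/κ_i)⁻¹`, any real `c₂ > 0`, and `P_K` the unique polynomial
with `z^K + z^{−K} − 2 = P_K(z + z^{−1} − 2)` for all `z ≠ 0`, the smaller-magnitude root
`λ₀(x) = [−K²G/κ_h + √((K²G/κ_h)² + 4 c₂ G P_K(x))]/(2 c₂)` of the quadratic truncation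
satisfies `λ₀(x)/x → κ_h` as `x → 0⁺`. -/
theorem stmt10 (K : ℕ) (hK : 2 ≤ K) (κ : Fin K → ℝ) (hκ : ∀ i, 0 < κ i)
    (c₂ : ℝ) (hc₂ : 0 < c₂) (P : Polynomial ℝ)
    (hP : ∀ z : ℂ, z ≠ 0 → z ^ K + z⁻¹ ^ K - 2 = Polynomial.aeval (z + z⁻¹ - 2) P) :
    Tendsto
      (fun x : ℝ =>
        ((-((K : ℝ) ^ 2 * (∏ i, κ i) / ((K : ℝ) * (∑ i, (κ i)⁻¹)⁻¹))
            + Real.sqrt (((K : ℝ) ^ 2 * (∏ i, κ i) / ((K : ℝ) * (∑ i, (κ i)⁻¹)⁻¹)) ^ 2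
                + 4 * c₂ * (∏ i, κ i) * P.eval x)) / (2 * c₂)) / x)
      (nhdsWithin 0 (Set.Ioi 0))
      (nhds ((K : ℝ) * (∑ i, (κ i)⁻¹)⁻¹)) := by
  have hK1 : 1 ≤ K := by omega
  have hKR : (0:ℝ) < K := by exact_mod_cast (by omega : 0 < K)
  set G := ∏ i, κ i with hGdef
  set κh := (K:ℝ) * (∑ i, (κ i)⁻¹)⁻¹ with hκhdef
  have hG : 0 < G := Finset.prod_pos (fun i _ => hκ i)
  have hsum : 0 < ∑ i, (κ i)⁻¹ :=
    Finset.sum_pos (fun i _ => inv_pos.mpr (hκ i)) ⟨⟨0, by omega⟩, Finset.mem_univ _⟩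
  have hκh : 0 < κh := mul_pos hKR (inv_pos.mpr hsum)
  set b := (K:ℝ)^2 * G / κh with hbdef
  have hb : 0 < b := by positivity
  -- real identity
  have hReal := stmt10_real_id K P hP
  -- P(0) = 0
  have hP0 : P.eval 0 = 0 := by
    have h := hReal 1 one_ne_zero
    norm_num at h
    linarith
  -- factor P = X * Q
  obtain ⟨Q, hQ⟩ : Polynomial.X ∣ P := by
    rw [Polynomial.X_dvd_iff, Polynomial.coeff_zero_eq_eval_zero]; exact hP0
  have hPQ : ∀ x : ℝ, P.eval x = x * Q.eval x := by
    intro x; rw [hQ]; simp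
  -- Q(0) = K^2 via a sequence z_n → 1⁺
  have hQ0 : Q.eval 0 = (K:ℝ)^2 := by
    set zf : ℕ → ℝ := fun n => 1 + ((n:ℝ)+1)⁻¹ with hzf
    have hzpos : ∀ n, 0 < zf n := by
      intro n; simp only [hzf]; positivity
    have hzne1 : ∀ n, zf n ≠ 1 := by
      intro n; have : (0:ℝ) < ((n:ℝ)+1)⁻¹ := by positivity
      simp only [hzf]; intro h; nlinarith
    set xf : ℕ → ℝ := fun n => zf n + (zf n)⁻¹ - 2 with hxf
    have hxne : ∀ n, xf n ≠ 0 := fun n => stmt10_xne (zf n) (hzpos n) (hzne1 n)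
    have hz1 : Tendsto zf atTop (nhds 1) := by
      have h1 : Tendsto (fun n : ℕ => ((n:ℝ)+1)) atTop atTop :=
        tendsto_atTop_add_const_right _ 1 tendsto_natCast_atTop_atTop
      have h2 := h1.inv_tendsto_atTop
      have := tendsto_const_nhds.add h2 (f := fun _ : ℕ => (1:ℝ))
      simpa using this
    have hx0 : Tendsto xf atTop (nhds 0) := by
      have hc : ContinuousAt (fun z : ℝ => z + z⁻¹ - 2) 1 :=
        (continuousAt_id.add (continuousAt_inv₀ one_ne_zero)).sub continuousAt_const
      have h4 : Tendsto (fun n => zf n + (zf n)⁻¹ - 2) atTop (nhds (1 + (1:ℝ)⁻¹ - 2)) :=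
        hc.tendsto.comp hz1
      norm_num at h4
      exact h4
    -- Q(xf n) equals the ratio
    have hQx : ∀ n, Q.eval (xf n) = (∑ i ∈ Finset.range K, (zf n)^i)^2 / (zf n)^(K-1) := by
      intro n
      have h1 := hReal (zf n) (ne_of_gt (hzpos n))
      rw [hPQ] at h1
      have h2 : Q.eval (xf n) = ((zf n) ^ K + (zf n)⁻¹ ^ K - 2) / xf n := by
        rw [h1]
        exact (mul_div_cancel_left₀ _ (hxne n)).symm
      rw [h2, stmt10_ratio K hK1 (zf n) (hzpos n) (hzne1 n)]
    -- the ratio tends to K^2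
    have hrt : Tendsto (fun n => (∑ i ∈ Finset.range K, (zf n)^i)^2 / (zf n)^(K-1))
        atTop (nhds ((K:ℝ)^2)) := by
      have hc : ContinuousAt (fun z : ℝ => (∑ i ∈ Finset.range K, z^i)^2 / z^(K-1)) 1 := by
        apply ContinuousAt.div
        · exact ((continuous_finset_sum _ (fun i _ => continuous_pow i)).pow 2).continuousAt
        · exact (continuous_pow (K-1)).continuousAt
        · simp
      have := hc.tendsto.comp hz1
      simpa [Function.comp_def] using this
    have hQt : Tendsto (fun n => Q.eval (xf n)) atTop (nhds (Q.eval 0)) :=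
      (Q.continuous.continuousAt.tendsto).comp hx0
    have := tendsto_nhds_unique hQt (by simpa only [hQx] using hrt)
    exact this
  -- main limit: rewrite the function eventually as F
  set F : ℝ → ℝ := fun x =>
    2 * G * Q.eval x / (Real.sqrt (b^2 + 4 * c₂ * G * P.eval x) + b) with hF
  have hPt : Tendsto (fun x : ℝ => P.eval x) (nhdsWithin 0 (Set.Ioi 0)) (nhds 0) := by
    have := (P.continuous.tendsto 0).mono_left (nhdsWithin_le_nhds (s := Set.Ioi 0))
    rwa [hP0] at this
  have hQt : Tendsto (fun x : ℝ => Q.eval x) (nhdsWithin 0 (Set.Ioi 0)) (nhds ((K:ℝ)^2)) := by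
    have := (Q.continuous.tendsto 0).mono_left (nhdsWithin_le_nhds (s := Set.Ioi 0))
    rwa [hQ0] at this
  have hFt : Tendsto F (nhdsWithin 0 (Set.Ioi 0)) (nhds κh) := by
    have hnum : Tendsto (fun x : ℝ => 2 * G * Q.eval x) (nhdsWithin 0 (Set.Ioi 0))
        (nhds (2 * G * (K:ℝ)^2)) := tendsto_const_nhds.mul hQt
    have hden : Tendsto (fun x : ℝ => Real.sqrt (b^2 + 4 * c₂ * G * P.eval x) + b)
        (nhdsWithin 0 (Set.Ioi 0)) (nhds (b + b)) := by
      have h1 : Tendsto (fun x : ℝ => b^2 + 4 * c₂ * G * P.eval x)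
          (nhdsWithin 0 (Set.Ioi 0)) (nhds (b^2)) := by
        have h0 : Tendsto (fun x : ℝ => b^2 + 4 * c₂ * G * P.eval x)
            (nhdsWithin 0 (Set.Ioi 0)) (nhds (b^2 + 4 * c₂ * G * 0)) :=
          (tendsto_const_nhds (x := b^2)).add ((tendsto_const_nhds (x := 4*c₂*G)).mul hPt)
        simpa using h0
      have h2 := (Real.continuous_sqrt.tendsto (b^2)).comp h1
      have h3 : Real.sqrt (b^2) = b := Real.sqrt_sq hb.le
      rw [h3] at h2
      exact h2.add tendsto_const_nhds
    have hval : 2 * G * (K:ℝ)^2 / (b + b) = κh := by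
      rw [hbdef]; field_simp; ring
    have := hnum.div hden (by positivity)
    rwa [hval] at this
  apply hFt.congr'
  have hev : ∀ᶠ x in nhdsWithin (0:ℝ) (Set.Ioi 0), 0 < b^2 + 4 * c₂ * G * P.eval x := by
    have h1 : Tendsto (fun x : ℝ => b^2 + 4 * c₂ * G * P.eval x)
        (nhdsWithin 0 (Set.Ioi 0)) (nhds (b^2)) := by
      have h0 : Tendsto (fun x : ℝ => b^2 + 4 * c₂ * G * P.eval x)
          (nhdsWithin 0 (Set.Ioi 0)) (nhds (b^2 + 4 * c₂ * G * 0)) :=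
        (tendsto_const_nhds (x := b^2)).add ((tendsto_const_nhds (x := 4*c₂*G)).mul hPt)
      simpa using h0
    exact h1.eventually (eventually_gt_nhds (by positivity))
  filter_upwards [hev, self_mem_nhdsWithin] with x hpos hx
  -- show F x = original x
  have hx0 : x ≠ 0 := ne_of_gt hx
  have hr2 : Real.sqrt (b^2 + 4 * c₂ * G * P.eval x) ^ 2 = b^2 + 4 * c₂ * G * P.eval x :=
    Real.sq_sqrt hpos.le
  have hr0 : 0 ≤ Real.sqrt (b^2 + 4 * c₂ * G * P.eval x) := Real.sqrt_nonneg _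
  have hrb : Real.sqrt (b^2 + 4 * c₂ * G * P.eval x) + b ≠ 0 := by positivity
  set r := Real.sqrt (b^2 + 4 * c₂ * G * P.eval x) with hr
  show F x = (-b + r) / (2 * c₂) / x
  rw [hF]
  rw [div_div, div_eq_div_iff hrb (by positivity)]
  linear_combination -hr2 - 4*c₂*G * hPQ x
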